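/- Let Z ≥ 2 be an integer, let x₂ ≤ 0, and let (Ω, μ) be a probability space with a measurable label map Y : Ω → {1,…,Z}. For a measurable classifier F : Ω → Δ_Z, define the pointwise loss ℓ(u, c) = L_EL(‖q_c − u‖₁), the clean risk R(F) = ∫ ℓ(F(ω), Y(ω)) dμ(ω), and for a noise rate η the symmetric-noise risk R^η(F) = ∫ [(1−η)ℓ(F(ω), Y(ω)) + (η/(Z−1)) Σ_{j ≠ Y(ω)} ℓ(F(ω), j)] dμ(ω). If 0 ≤ η < (Z−1)/Z and F*, F : Ω → Δ_Z are measurable classifiers with R(F*) ≤ R(F), then R^η(F*) ≤ R^η(F); that is, the EL loss is noise-tolerant to symmetric (uniform) label noise with noise rate η < (Z−1)/Z. -/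

import Mathlib

open MeasureTheory Real Finset

/-- Negative fraction linear (NFL) loss with parameter `x1`. -/
noncomputable def LNFL (x1 x : ℝ) : ℝ := if x1 ≤ x then x / x1 ^ 2 - 1 / x1 else -(1 / x)

/-- Exponential linear (EL) loss with parameter `x2`. -/
noncomputable def LEL (x2 x : ℝ) : ℝ := if x2 ≤ x then Real.exp x2 * (x + 1 - x2) else Real.exp x

/-- The one-hot vector `q_c` for class `c`. -/
def onehot {Z : ℕ} (c : Fin Z) : Fin Z → ℝ := fun z => if z = c then 1 else 0

/-- The ℓ1 norm on `ℝ^Z`. -/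
noncomputable def l1norm {Z : ℕ} (v : Fin Z → ℝ) : ℝ := ∑ z, |v z|

/-- Membership in the probability simplex `Δ_Z`. -/
def inSimplex {Z : ℕ} (u : Fin Z → ℝ) : Prop := (∀ z, 0 ≤ u z) ∧ ∑ z, u z = 1

/-- On the simplex, the EL loss of the ℓ1 distance to a one-hot vector is affine in `u c`. -/
lemma LEL_loss_eval {Z : ℕ} {x2 : ℝ} (hx2 : x2 ≤ 0) {u : Fin Z → ℝ}
    (hu : inSimplex u) (c : Fin Z) :
    LEL x2 (l1norm (onehot c - u)) = Real.exp x2 * (3 - x2 - 2 * u c) := by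
  obtain ⟨hpos, hsum⟩ := hu
  have huc : u c ≤ 1 := by
    rw [← hsum]
    exact Finset.single_le_sum (fun i _ => hpos i) (mem_univ c)
  have hl1 : l1norm (onehot c - u) = 2 - 2 * u c := by
    unfold l1norm onehot
    simp only [Pi.sub_apply]
    rw [← Finset.add_sum_erase Finset.univ
      (fun z => |(if z = c then (1:ℝ) else 0) - u z|) (mem_univ c)]
    simp only [if_pos rfl]
    have h1 : |(1 : ℝ) - u c| = 1 - u c := abs_of_nonneg (by linarith)
    have h2 : ∀ z ∈ Finset.univ.erase c,
        |(if z = c then (1:ℝ) else 0) - u z| = u z := by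
      intro z hz
      rw [if_neg (Finset.ne_of_mem_erase hz)]
      rw [zero_sub, abs_neg, abs_of_nonneg (hpos z)]
    rw [Finset.sum_congr rfl h2]
    simp only [if_true]
    rw [h1]
    have herase : ∑ z ∈ Finset.univ.erase c, u z = 1 - u c := by
      have := Finset.add_sum_erase Finset.univ u (mem_univ c)
      linarith [hsum ▸ this]
    rw [herase]; ring
  rw [hl1, LEL, if_pos (by linarith)]
  ring

lemma sum_ne_loss {Z : ℕ} {x2 : ℝ} (hx2 : x2 ≤ 0) {u : Fin Z → ℝ}
    (hu : inSimplex u) (c : Fin Z) :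
    ∑ j ∈ Finset.univ.filter (· ≠ c), LEL x2 (l1norm (onehot j - u))
      = Real.exp x2 * ((Z : ℝ) * (3 - x2) - 2) - LEL x2 (l1norm (onehot c - u)) := by
  have htot : ∑ j, LEL x2 (l1norm (onehot j - u)) = Real.exp x2 * ((Z : ℝ) * (3 - x2) - 2) := by
    have : ∀ j, LEL x2 (l1norm (onehot j - u)) = Real.exp x2 * (3 - x2 - 2 * u j) :=
      fun j => LEL_loss_eval hx2 hu j
    rw [Finset.sum_congr rfl (fun j _ => this j)]
    rw [← Finset.mul_sum]
    have : ∑ j, (3 - x2 - 2 * u j) = (Z : ℝ) * (3 - x2) - 2 * ∑ j, u j := by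
      rw [Finset.sum_sub_distrib, Finset.sum_const, Finset.card_univ, Fintype.card_fin,
        ← Finset.mul_sum]
      push_cast; ring
    rw [this, hu.2]; ring
  rw [Finset.filter_ne', Finset.sum_erase_eq_sub (mem_univ c), htot]

/-- Measurability of `ω ↦ G ω (Y ω)`. -/
lemma meas_eval {Z : ℕ} {Ω : Type*} [MeasurableSpace Ω] {Y : Ω → Fin Z} (hY : Measurable Y)
    {G : Ω → Fin Z → ℝ} (hG : Measurable G) :
    Measurable (fun ω => G ω (Y ω)) := by
  have : (fun ω => G ω (Y ω)) = fun ω => ∑ c, if Y ω = c then G ω c else 0 := by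
    funext ω
    rw [Finset.sum_eq_single (Y ω) (fun b _ hb => if_neg (fun h => hb h.symm))
      (fun h => absurd (mem_univ _) h)]
    simp
  rw [this]
  exact Finset.measurable_sum _ fun c _ =>
    Measurable.ite (hY (MeasurableSet.singleton c)) ((measurable_pi_apply c).comp hG)
      measurable_const

/-- The noisy risk is an affine function of the clean risk. -/
lemma noisy_risk_eq {Z : ℕ} (hZ : 2 ≤ Z) {x2 : ℝ} (hx2 : x2 ≤ 0)
    {Ω : Type*} [MeasurableSpace Ω] (μ : Measure Ω) [IsProbabilityMeasure μ]
    (Y : Ω → Fin Z) (hY : Measurable Y) (η : ℝ)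
    (G : Ω → Fin Z → ℝ) (hG : Measurable G) (hGS : ∀ ω, inSimplex (G ω)) :
    (∫ ω, ((1 - η) * LEL x2 (l1norm (onehot (Y ω) - G ω))
        + η / ((Z : ℝ) - 1) *
          ∑ j ∈ Finset.univ.filter (· ≠ Y ω), LEL x2 (l1norm (onehot j - G ω))) ∂μ)
    = (1 - η - η / ((Z : ℝ) - 1)) * (∫ ω, LEL x2 (l1norm (onehot (Y ω) - G ω)) ∂μ)
      + η / ((Z : ℝ) - 1) * (Real.exp x2 * ((Z : ℝ) * (3 - x2) - 2)) := by
  have hint : Integrable (fun ω => LEL x2 (l1norm (onehot (Y ω) - G ω))) μ := by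
    have heq : (fun ω => LEL x2 (l1norm (onehot (Y ω) - G ω)))
        = fun ω => Real.exp x2 * (3 - x2 - 2 * G ω (Y ω)) := by
      funext ω; exact LEL_loss_eval hx2 (hGS ω) (Y ω)
    rw [heq]
    apply Integrable.mono' (integrable_const (Real.exp x2 * (3 - x2)))
    · exact (((meas_eval hY hG).const_mul 2).const_sub (3 - x2)).const_mul
        (Real.exp x2) |>.aestronglyMeasurable
    · filter_upwards with ω
      have h0 : 0 ≤ G ω (Y ω) := (hGS ω).1 _
      have h1 : G ω (Y ω) ≤ 1 := by
        rw [← (hGS ω).2]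
        exact Finset.single_le_sum (fun i _ => (hGS ω).1 i) (mem_univ _)
      have he : 0 < Real.exp x2 := Real.exp_pos x2
      rw [Real.norm_eq_abs, abs_of_nonneg (by nlinarith)]
      nlinarith
  have hptw : ∀ ω, (1 - η) * LEL x2 (l1norm (onehot (Y ω) - G ω))
        + η / ((Z : ℝ) - 1) *
          ∑ j ∈ Finset.univ.filter (· ≠ Y ω), LEL x2 (l1norm (onehot j - G ω))
      = (1 - η - η / ((Z : ℝ) - 1)) * LEL x2 (l1norm (onehot (Y ω) - G ω))
        + η / ((Z : ℝ) - 1) * (Real.exp x2 * ((Z : ℝ) * (3 - x2) - 2)) := by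
    intro ω
    rw [sum_ne_loss hx2 (hGS ω) (Y ω)]
    ring
  rw [integral_congr_ae (Filter.Eventually.of_forall hptw)]
  rw [integral_add (hint.const_mul _) (integrable_const _), integral_const_mul,
    integral_const, probReal_univ]
  simp

theorem el_noise_tolerant {Z : ℕ} (hZ : 2 ≤ Z) {x2 : ℝ} (hx2 : x2 ≤ 0)
    {Ω : Type*} [MeasurableSpace Ω] (μ : Measure Ω) [IsProbabilityMeasure μ]
    (Y : Ω → Fin Z) (hY : Measurable Y)
    {η : ℝ} (hη0 : 0 ≤ η) (hη : η < ((Z : ℝ) - 1) / Z)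
    (Fstar F : Ω → Fin Z → ℝ) (hFstar : Measurable Fstar) (hF : Measurable F)
    (hFstarS : ∀ ω, inSimplex (Fstar ω)) (hFS : ∀ ω, inSimplex (F ω))
    (hclean : (∫ ω, LEL x2 (l1norm (onehot (Y ω) - Fstar ω)) ∂μ)
            ≤ ∫ ω, LEL x2 (l1norm (onehot (Y ω) - F ω)) ∂μ) :
    (∫ ω, ((1 - η) * LEL x2 (l1norm (onehot (Y ω) - Fstar ω))
        + η / ((Z : ℝ) - 1) *
          ∑ j ∈ Finset.univ.filter (· ≠ Y ω), LEL x2 (l1norm (onehot j - Fstar ω))) ∂μ)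
    ≤ ∫ ω, ((1 - η) * LEL x2 (l1norm (onehot (Y ω) - F ω))
        + η / ((Z : ℝ) - 1) *
          ∑ j ∈ Finset.univ.filter (· ≠ Y ω), LEL x2 (l1norm (onehot j - F ω))) ∂μ := by
  rw [noisy_risk_eq hZ hx2 μ Y hY η Fstar hFstar hFstarS,
    noisy_risk_eq hZ hx2 μ Y hY η F hF hFS]
  have hZ1 : (1 : ℝ) ≤ (Z : ℝ) - 1 := by
    have : (2 : ℝ) ≤ (Z : ℝ) := by exact_mod_cast hZ
    linarith
  have ha : 0 ≤ 1 - η - η / ((Z : ℝ) - 1) := by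
    have hZpos : (0 : ℝ) < (Z : ℝ) := by linarith
    rw [lt_div_iff₀ hZpos] at hη
    have h := (div_le_iff₀ (show (0:ℝ) < (Z : ℝ) - 1 by linarith)).mpr
      (show η ≤ (1 - η) * ((Z : ℝ) - 1) by nlinarith)
    linarith
  have := mul_le_mul_of_nonneg_left hclean ha
  linarith
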